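/- For every positive integer n, the number of partitions of n in which exactly one part appears exactly three times and every other part appears exactly once equals the difference between the total number of parts counted over all partitions of n into distinct parts and the total number of distinct part values counted over all partitions of n into odd parts. -/

import Mathlib

open PowerSeries

namespace Theorems100

noncomputable section

variable {α : Type*}

open Finset

open scoped Classical

/-- The partial product for the generating function for odd partitions.
TODO: As `m` tends to infinity, this converges (in the `X`-adic topology).

If `m` is sufficiently large, the `i`th coefficient gives the number of odd partitions of the
natural number `i`: proved in `oddGF_prop`.
It is stated for an arbitrary field `α`, though it usually suffices to use `ℚ` or `ℝ`.
-/
def partialOddGF (m : ℕ) [Field α] :=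
  ∏ i ∈ range m, (1 - (X : PowerSeries α) ^ (2 * i + 1))⁻¹

/-- The partial product for the generating function for distinct partitions.
TODO: As `m` tends to infinity, this converges (in the `X`-adic topology).

If `m` is sufficiently large, the `i`th coefficient gives the number of distinct partitions of the
natural number `i`: proved in `distinctGF_prop`.
It is stated for an arbitrary commutative semiring `α`, though it usually suffices to use `ℕ`, `ℚ`
or `ℝ`.
-/
def partialDistinctGF (m : ℕ) [CommSemiring α] :=
  ∏ i ∈ range m, (1 + (X : PowerSeries α) ^ (i + 1))

open Finset.HasAntidiagonal

universe u
variable {ι : Type u}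

/-- A convenience constructor for the power series whose coefficients indicate a subset. -/
def indicatorSeries (α : Type*) [Semiring α] (s : Set ℕ) : PowerSeries α :=
  PowerSeries.mk fun n => if n ∈ s then 1 else 0

theorem coeff_indicator (s : Set ℕ) [Semiring α] (n : ℕ) :
    coeff n (indicatorSeries α s) = if n ∈ s then 1 else 0 :=
  coeff_mk _ _

theorem coeff_indicator_pos (s : Set ℕ) [Semiring α] (n : ℕ) (h : n ∈ s) :
    coeff n (indicatorSeries α s) = 1 := by rw [coeff_indicator, if_pos h]

theorem coeff_indicator_neg (s : Set ℕ) [Semiring α] (n : ℕ) (h : n ∉ s) :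
    coeff n (indicatorSeries α s) = 0 := by rw [coeff_indicator, if_neg h]

theorem constantCoeff_indicator (s : Set ℕ) [Semiring α] :
    constantCoeff (indicatorSeries α s) = if 0 ∈ s then 1 else 0 :=
  rfl

theorem two_series (i : ℕ) [Semiring α] :
    1 + (X : PowerSeries α) ^ i.succ = indicatorSeries α {0, i.succ} := by
  ext n
  simp only [coeff_indicator, coeff_one, coeff_X_pow, Set.mem_insert_iff, Set.mem_singleton_iff,
    map_add]
  cases' n with d
  · simp [(Nat.succ_ne_zero i).symm]
  · simp [Nat.succ_ne_zero d]

theorem num_series' [Field α] (i : ℕ) :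
    (1 - (X : PowerSeries α) ^ (i + 1))⁻¹ = indicatorSeries α {k | i + 1 ∣ k} := by
  rw [PowerSeries.inv_eq_iff_mul_eq_one]
  · ext n
    cases n with
    | zero => simp [mul_sub, zero_pow, constantCoeff_indicator]
    | succ n =>
      simp only [coeff_one, if_false, mul_sub, mul_one, coeff_indicator,
        LinearMap.map_sub, reduceCtorEq]
      simp_rw [coeff_mul, coeff_X_pow, coeff_indicator, @boole_mul _ _ _ _]
      simp only [Set.mem_setOf_eq]; erw [sum_ite, sum_ite]
      simp_rw [@filter_filter _ _ _ _ _, sum_const_zero, add_zero, sum_const, nsmul_eq_mul, mul_one,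
        sub_eq_iff_eq_add, zero_add]
      symm
      split_ifs with h
      · suffices #{a ∈ antidiagonal (n + 1) | i + 1 ∣ a.fst ∧ a.snd = i + 1} = 1 by
          convert congr_arg ((↑) : ℕ → α) this; norm_cast
        rw [card_eq_one]
        cases' h with p hp
        refine ⟨((i + 1) * (p - 1), i + 1), ?_⟩
        ext ⟨a₁, a₂⟩
        simp only [mem_filter, Prod.mk_inj, Finset.HasAntidiagonal.mem_antidiagonal, mem_singleton]
        constructor
        · rintro ⟨a_left, ⟨a, rfl⟩, rfl⟩
          refine ⟨?_, rfl⟩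
          rw [Nat.mul_sub_left_distrib, ← hp, ← a_left, mul_one, Nat.add_sub_cancel]
        · rintro ⟨rfl, rfl⟩
          match p with
          | 0 => rw [mul_zero] at hp; cases hp
          | p + 1 => rw [hp]; simp [mul_add]
      · suffices #{a ∈ antidiagonal (n + 1) | i + 1 ∣ a.fst ∧ a.snd = i + 1} = 0 by
          convert congr_arg ((↑) : ℕ → α) this; norm_cast
        rw [card_eq_zero]
        apply eq_empty_of_forall_notMem
        simp only [Prod.forall, mem_filter, not_and, Finset.HasAntidiagonal.mem_antidiagonal]
        rintro _ h₁ h₂ ⟨a, rfl⟩ rfl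
        apply h
        simp [← h₂]
  · simp [zero_pow]

def mkOdd : ℕ ↪ ℕ :=
  ⟨fun i => 2 * i + 1, fun x y h => by linarith⟩

-- The main workhorse of the partition theorem proof.
theorem partialGF_prop (α : Type*) [CommSemiring α] (n : ℕ) (s : Finset ℕ) (hs : ∀ i ∈ s, 0 < i)
    (c : ℕ → Set ℕ) (hc : ∀ i, i ∉ s → 0 ∈ c i) :
    #{p : n.Partition | (∀ j, p.parts.count j ∈ c j) ∧ ∀ j ∈ p.parts, j ∈ s} =
      coeff n (∏ i ∈ s, indicatorSeries α ((· * i) '' c i)) := by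
  simp_rw [coeff_prod, coeff_indicator, prod_boole, sum_boole]
  apply congr_arg
  simp only [mem_univ, forall_true_left, not_and, not_forall, exists_prop,
    Set.mem_image, not_exists]
  set φ : (a : Nat.Partition n) →
    a ∈ filter (fun p ↦ (∀ (j : ℕ), Multiset.count j p.parts ∈ c j) ∧ ∀ j ∈ p.parts, j ∈ s) univ →
    ℕ →₀ ℕ := fun p _ => {
      toFun := fun i => Multiset.count i p.parts • i
      support := Finset.filter (fun i => i ≠ 0) p.parts.toFinset
      mem_support_toFun := fun a => by
        simp only [smul_eq_mul, ne_eq, mul_eq_zero, Multiset.count_eq_zero]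
        rw [not_or, not_not]
        simp only [Multiset.mem_toFinset, not_not, mem_filter] }
  refine Finset.card_bij φ ?_ ?_ ?_
  · intro a ha
    simp only [φ, not_forall, not_exists, not_and, exists_prop, mem_filter]
    rw [mem_finsuppAntidiag]
    dsimp only [ne_eq, smul_eq_mul, id_eq, eq_mpr_eq_cast, le_eq_subset, Finsupp.coe_mk]
    simp only [mem_univ, forall_true_left, not_and, not_forall, exists_prop,
      mem_filter, true_and] at ha
    refine ⟨⟨?_, fun i ↦ ?_⟩, fun i _ ↦ ⟨a.parts.count i, ha.1 i, rfl⟩⟩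
    · conv_rhs => simp [← a.parts_sum]
      rw [sum_multiset_count_of_subset _ s]
      · simp only [smul_eq_mul]
      · intro i
        simp only [Multiset.mem_toFinset, not_not, mem_filter]
        apply ha.2
    · simp only [ne_eq, Multiset.mem_toFinset, not_not, mem_filter, and_imp]
      exact fun hi _ ↦ ha.2 i hi
  · intro p₁ hp₁ p₂ hp₂ h
    apply Nat.Partition.ext
    simp only [true_and, mem_univ, mem_filter] at hp₁ hp₂
    ext i
    simp only [φ, ne_eq, Multiset.mem_toFinset, not_not, smul_eq_mul, Finsupp.mk.injEq] at h
    by_cases hi : i = 0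
    · rw [hi]
      rw [Multiset.count_eq_zero_of_notMem]
      · rw [Multiset.count_eq_zero_of_notMem]
        intro a; exact Nat.lt_irrefl 0 (hs 0 (hp₂.2 0 a))
      intro a; exact Nat.lt_irrefl 0 (hs 0 (hp₁.2 0 a))
    · rw [← mul_left_inj' hi]
      rw [funext_iff] at h
      exact h.2 i
  · simp only [φ, mem_filter, mem_finsuppAntidiag, mem_univ, exists_prop, true_and, and_assoc]
    rintro f ⟨hf, hf₃, hf₄⟩
    have hf' : f ∈ finsuppAntidiag s n := mem_finsuppAntidiag.mpr ⟨hf, hf₃⟩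
    simp only [mem_finsuppAntidiag] at hf'
    refine ⟨⟨∑ i ∈ s, Multiset.replicate (f i / i) i, ?_, ?_⟩, ?_, ?_, ?_⟩
    · intro i hi
      simp only [exists_prop, Multiset.mem_sum, mem_map, Function.Embedding.coeFn_mk] at hi
      rcases hi with ⟨t, ht, z⟩
      apply hs
      rwa [Multiset.eq_of_mem_replicate z]
    · simp_rw [Multiset.sum_sum, Multiset.sum_replicate, Nat.nsmul_eq_mul]
      rw [← hf'.1]
      refine sum_congr rfl fun i hi => Nat.div_mul_cancel ?_
      rcases hf₄ i hi with ⟨w, _, hw₂⟩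
      rw [← hw₂]
      exact dvd_mul_left _ _
    · intro i
      simp_rw [Multiset.count_sum', Multiset.count_replicate, sum_ite_eq']
      split_ifs with h
      · rcases hf₄ i h with ⟨w, hw₁, hw₂⟩
        rwa [← hw₂, Nat.mul_div_cancel _ (hs i h)]
      · exact hc _ h
    · intro i hi
      rw [Multiset.mem_sum] at hi
      rcases hi with ⟨j, hj₁, hj₂⟩
      rwa [Multiset.eq_of_mem_replicate hj₂]
    · ext i
      simp_rw [Multiset.count_sum', Multiset.count_replicate, sum_ite_eq']
      simp only [ne_eq, Multiset.mem_toFinset, not_not, smul_eq_mul, ite_mul,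
        zero_mul, Finsupp.coe_mk]
      split_ifs with h
      · apply Nat.div_mul_cancel
        rcases hf₄ i h with ⟨w, _, hw₂⟩
        apply Dvd.intro_left _ hw₂
      · apply symm
        rw [← Finsupp.notMem_support_iff]
        exact notMem_mono hf'.2 h

theorem partialOddGF_prop [Field α] (n m : ℕ) :
    #{p : n.Partition | ∀ j ∈ p.parts, j ∈ (range m).map mkOdd} = coeff (R := α) n (partialOddGF m) := by
  rw [partialOddGF]
  convert partialGF_prop α n
    ((range m).map mkOdd) _ (fun _ => Set.univ) (fun _ _ => trivial) using 2
  · congr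
    simp only [true_and, forall_const, Set.mem_univ]
  · rw [Finset.prod_map]
    simp_rw [num_series']
    congr! 2 with x
    ext k
    constructor
    · rintro ⟨p, rfl⟩
      refine ⟨p, ⟨⟩, ?_⟩
      apply mul_comm
    rintro ⟨a_w, -, rfl⟩
    apply Dvd.intro_left a_w rfl
  · intro i
    rw [mem_map]
    rintro ⟨a, -, rfl⟩
    exact Nat.succ_pos _

/-- If m is big enough, the partial product's coefficient counts the number of odd partitions -/
theorem oddGF_prop [Field α] (n m : ℕ) (h : n < m * 2) :
    #(Nat.Partition.odds n) = coeff (R := α) n (partialOddGF m) := by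
  rw [← partialOddGF_prop, Nat.Partition.odds, Nat.Partition.restricted]
  congr with p
  apply forall₂_congr
  intro i hi
  have hin : i ≤ n := by
    simpa [p.parts_sum] using Multiset.single_le_sum (fun _ _ => Nat.zero_le _) _ hi
  simp only [mkOdd, exists_prop, mem_range, Function.Embedding.coeFn_mk, mem_map]
  constructor
  · intro hi₂
    have := Nat.mod_add_div i 2
    rw [Nat.not_even_iff] at hi₂
    rw [hi₂, add_comm] at this
    refine ⟨i / 2, ?_, this⟩
    rw [Nat.div_lt_iff_lt_mul zero_lt_two]
    exact lt_of_le_of_lt hin h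
  · rintro ⟨a, -, rfl⟩
    rw [even_iff_two_dvd]
    apply Nat.two_not_dvd_two_mul_add_one

theorem partialDistinctGF_prop [CommSemiring α] (n m : ℕ) :
    #{p : n.Partition |
        p.parts.Nodup ∧ ∀ j ∈ p.parts, j ∈ (range m).map ⟨Nat.succ, Nat.succ_injective⟩} =
      coeff (R := α) n (partialDistinctGF m) := by
  rw [partialDistinctGF]
  convert partialGF_prop α n
    ((range m).map ⟨Nat.succ, Nat.succ_injective⟩) _ (fun _ => {0, 1}) (fun _ _ => Or.inl rfl)
    using 2
  · congr! with p
    rw [Multiset.nodup_iff_count_le_one]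
    congr! 1 with i
    rcases Multiset.count i p.parts with (_ | _ | ms) <;> simp
  · simp_rw [Finset.prod_map, two_series]
    congr with i
    simp [Set.image_pair]
  · simp only [mem_map, Function.Embedding.coeFn_mk]
    rintro i ⟨_, _, rfl⟩
    apply Nat.succ_pos

/-- If m is big enough, the partial product's coefficient counts the number of distinct partitions
-/
theorem distinctGF_prop [CommSemiring α] (n m : ℕ) (h : n < m + 1) :
    #(Nat.Partition.distincts n) = coeff (R := α) n (partialDistinctGF m) := by
  rw [← partialDistinctGF_prop, Nat.Partition.distincts]
  congr with p
  apply (and_iff_left _).symm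
  intro i hi
  have : i ≤ n := by
    simpa [p.parts_sum] using Multiset.single_le_sum (fun _ _ => Nat.zero_le _) _ hi
  simp only [mkOdd, exists_prop, mem_range, Function.Embedding.coeFn_mk, mem_map]
  refine ⟨i - 1, ?_, Nat.succ_pred_eq_of_pos (p.parts_pos hi)⟩
  rw [tsub_lt_iff_right (Nat.one_le_iff_ne_zero.mpr (p.parts_pos hi).ne')]
  exact lt_of_le_of_lt this h

/-- The key proof idea for the partition theorem, showing that the generating functions for both
sequences are ultimately the same (since the factor converges to 0 as m tends to infinity).
It's enough to not take the limit though, and just consider large enough `m`.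
-/
theorem same_gf [Field α] (m : ℕ) :
    (partialOddGF m * (range m).prod fun i => 1 - (X : PowerSeries α) ^ (m + i + 1)) =
      partialDistinctGF m := by
  rw [partialOddGF, partialDistinctGF]
  induction' m with m ih
  · simp
  set! π₀ : PowerSeries α := ∏ i ∈ range m, (1 - X ^ (m + 1 + i + 1)) with hπ₀
  set! π₁ : PowerSeries α := ∏ i ∈ range m, (1 - X ^ (2 * i + 1))⁻¹ with hπ₁
  set! π₂ : PowerSeries α := ∏ i ∈ range m, (1 - X ^ (m + i + 1)) with hπ₂
  set! π₃ : PowerSeries α := ∏ i ∈ range m, (1 + X ^ (i + 1)) with hπ₃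
  rw [← hπ₃] at ih
  have h : constantCoeff (1 - (X : PowerSeries α) ^ (2 * m + 1)) ≠ 0 := by
    rw [RingHom.map_sub, RingHom.map_pow, constantCoeff_one, constantCoeff_X,
      zero_pow (2 * m).succ_ne_zero, sub_zero]
    exact one_ne_zero
  calc
    (∏ i ∈ range (m + 1), (1 - X ^ (2 * i + 1))⁻¹) *
          ∏ i ∈ range (m + 1), (1 - X ^ (m + 1 + i + 1)) =
        π₁ * (1 - X ^ (2 * m + 1))⁻¹ * (π₀ * (1 - X ^ (m + 1 + m + 1))) := by
      rw [prod_range_succ _ m, ← hπ₁, prod_range_succ _ m, ← hπ₀]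
    _ = π₁ * (1 - X ^ (2 * m + 1))⁻¹ * (π₀ * ((1 + X ^ (m + 1)) * (1 - X ^ (m + 1)))) := by
      rw [← sq_sub_sq, one_pow, add_assoc _ m 1, ← two_mul (m + 1), pow_mul']
    _ = π₀ * (1 - X ^ (m + 1)) * (1 - X ^ (2 * m + 1))⁻¹ * (π₁ * (1 + X ^ (m + 1))) := by ring
    _ =
        (∏ i ∈ range (m + 1), (1 - X ^ (m + 1 + i))) * (1 - X ^ (2 * m + 1))⁻¹ *
          (π₁ * (1 + X ^ (m + 1))) := by
      rw [prod_range_succ', add_zero, hπ₀]; simp_rw [← add_assoc]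
    _ = π₂ * (1 - X ^ (m + 1 + m)) * (1 - X ^ (2 * m + 1))⁻¹ * (π₁ * (1 + X ^ (m + 1))) := by
      rw [add_right_comm, hπ₂, ← prod_range_succ]; simp_rw [add_right_comm]
    _ = π₂ * (1 - X ^ (2 * m + 1)) * (1 - X ^ (2 * m + 1))⁻¹ * (π₁ * (1 + X ^ (m + 1))) := by
      rw [two_mul, add_right_comm _ m 1]
    _ = (1 - X ^ (2 * m + 1)) * (1 - X ^ (2 * m + 1))⁻¹ * π₂ * (π₁ * (1 + X ^ (m + 1))) := by ring
    _ = π₂ * (π₁ * (1 + X ^ (m + 1))) := by rw [PowerSeries.mul_inv_cancel _ h, one_mul]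
    _ = π₁ * π₂ * (1 + X ^ (m + 1)) := by ring
    _ = π₃ * (1 + X ^ (m + 1)) := by rw [ih]
    _ = _ := by rw [prod_range_succ]

theorem same_coeffs [Field α] (m n : ℕ) (h : n ≤ m) :
    coeff (R := α) n (partialOddGF m) = coeff (R := α) n (partialDistinctGF m) := by
  rw [← same_gf, coeff_mul_prod_one_sub_of_lt_order]
  rintro i -
  rw [order_X_pow]
  exact mod_cast Nat.lt_succ_of_le (le_add_right h)

theorem partition_theorem (n : ℕ) : #(Nat.Partition.odds n) = #(Nat.Partition.distincts n) := by
  suffices (#(Nat.Partition.odds n) : ℚ) = #(Nat.Partition.distincts n) from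
    mod_cast this
  rw [distinctGF_prop n (n + 1) (by linarith)]
  rw [oddGF_prop n (n + 1) (by linarith)]
  apply same_coeffs (n + 1) n n.le_succ

end

end Theorems100


namespace OPT3
open Theorems100 PowerSeries Finset
open scoped Classical

noncomputable section

lemma indicator_single (α : Type*) [Semiring α] (k : ℕ) :
    indicatorSeries α {k} = (X : PowerSeries α) ^ k := by
  ext d
  rw [coeff_indicator, coeff_X_pow]
  simp [eq_comm]

lemma one_add_X_pow (α : Type*) [Semiring α] (i : ℕ) (hi : 0 < i) :
    1 + (X : PowerSeries α) ^ i = indicatorSeries α {0, i} := by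
  obtain ⟨j, rfl⟩ := Nat.exists_eq_succ_of_ne_zero hi.ne'
  exact two_series j

lemma inv_sub_one (i : ℕ) :
    indicatorSeries ℚ {b | (i + 1) ∣ b ∧ b ≠ 0} = (1 - (X : PowerSeries ℚ) ^ (i + 1))⁻¹ - 1 := by
  rw [num_series']
  ext d
  rw [map_sub, coeff_indicator, coeff_indicator, coeff_one]
  rcases eq_or_ne d 0 with rfl | hd
  · simp
  · simp [hd]

variable {n : ℕ}

def sD (n : ℕ) : Finset ℕ := (range (n + 1)).map ⟨Nat.succ, Nat.succ_injective⟩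

def sO (n : ℕ) : Finset ℕ := (range (n + 1)).map mkOdd

lemma mem_sD {k : ℕ} : k ∈ sD n ↔ 0 < k ∧ k ≤ n + 1 := by
  simp only [sD, mem_map, mem_range, Function.Embedding.coeFn_mk, Nat.succ_eq_add_one]
  constructor
  · rintro ⟨a, ha, rfl⟩; omega
  · rintro ⟨h1, h2⟩; exact ⟨k - 1, by omega, by omega⟩

lemma mem_sO {k : ℕ} : k ∈ sO n ↔ ¬Even k ∧ k ≤ 2 * n + 1 := by
  simp only [sO, mkOdd, mem_map, mem_range, Function.Embedding.coeFn_mk, Nat.even_iff]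
  constructor
  · rintro ⟨a, ha, rfl⟩; change ¬(2 * a + 1) % 2 = 0 ∧ 2 * a + 1 ≤ 2 * n + 1; omega
  · rintro ⟨h1, h2⟩; exact ⟨k / 2, by omega, by change 2 * (k / 2) + 1 = k; omega⟩

lemma sD_pos : ∀ i ∈ sD n, 0 < i := fun i hi => (mem_sD.mp hi).1

lemma sO_pos : ∀ i ∈ sO n, 0 < i := fun i hi => by
  have := (mem_sO.mp hi).1; rw [Nat.even_iff] at this; omega

lemma parts_le {p : n.Partition} {j : ℕ} (hj : j ∈ p.parts) : j ≤ n := by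
  simpa [p.parts_sum] using Multiset.single_le_sum (fun _ _ => Nat.zero_le _) _ hj

lemma parts_mem_sD {p : n.Partition} {j : ℕ} (hj : j ∈ p.parts) : j ∈ sD n :=
  mem_sD.mpr ⟨p.parts_pos hj, by have := parts_le hj; omega⟩

lemma parts_mem_sO {p : n.Partition} {j : ℕ} (hj : j ∈ p.parts) (hodd : ¬Even j) : j ∈ sO n :=
  mem_sO.mpr ⟨hodd, by have := parts_le hj; omega⟩

lemma countD (k : ℕ) (hk : k ∈ sD n) :
    ((#(univ.filter fun p : n.Partition => p.parts.Nodup ∧ k ∈ p.parts) : ℚ)) =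
      coeff n ((X : PowerSeries ℚ) ^ k * ∏ j ∈ (sD n).erase k, (1 + X ^ j)) := by
  have hprop := partialGF_prop ℚ n (sD n) sD_pos
    (fun j => if j = k then {1} else {0, 1})
    (fun i hi => by
      have h : i ≠ k := fun h => hi (h ▸ hk)
      show (0 : ℕ) ∈ if i = k then ({1} : Set ℕ) else {0, 1}
      rw [if_neg h]; exact Or.inl rfl)
  have hset : (univ.filter fun p : n.Partition => p.parts.Nodup ∧ k ∈ p.parts) =
      univ.filter (fun p : n.Partition =>
        (∀ j, p.parts.count j ∈ (if j = k then ({1} : Set ℕ) else {0, 1})) ∧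
          ∀ j ∈ p.parts, j ∈ sD n) := by
    apply filter_congr
    intro p _
    constructor
    · rintro ⟨hnd, hkmem⟩
      refine ⟨fun j => ?_, fun j hj => parts_mem_sD hj⟩
      split_ifs with h
      · subst h
        simpa using Multiset.count_eq_one_of_mem hnd hkmem
      · have := Multiset.nodup_iff_count_le_one.mp hnd j
        simp only [Set.mem_insert_iff, Set.mem_singleton_iff]
        omega
    · rintro ⟨hc, -⟩
      have hcount : ∀ j, p.parts.count j ≤ 1 := fun j => by
        have := hc j
        split_ifs at this with h
        · simp only [Set.mem_singleton_iff] at this; omega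
        · simp only [Set.mem_insert_iff, Set.mem_singleton_iff] at this; omega
      refine ⟨Multiset.nodup_iff_count_le_one.mpr hcount, ?_⟩
      have := hc k
      rw [if_pos rfl] at this
      simp only [Set.mem_singleton_iff] at this
      exact Multiset.count_pos.mp (by omega)
  have hprod : ∏ i ∈ sD n, indicatorSeries ℚ ((· * i) '' (if i = k then ({1} : Set ℕ) else {0, 1}))
      = (X : PowerSeries ℚ) ^ k * ∏ j ∈ (sD n).erase k, (1 + X ^ j) := by
    rw [← Finset.mul_prod_erase _ _ hk]
    congr 1
    · rw [if_pos rfl, Set.image_singleton, one_mul, indicator_single]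
    · refine Finset.prod_congr rfl fun j hj => ?_
      rw [if_neg (mem_erase.mp hj).1,
        one_add_X_pow ℚ j (sD_pos j (mem_erase.mp hj).2)]
      congr 1
      rw [Set.image_pair]
      simp
  rw [hset]
  rw [hprop]
  rw [hprod]

lemma count3 (k : ℕ) (hk : k ∈ sD n) :
    ((#(univ.filter fun p : n.Partition =>
        p.parts.count k = 3 ∧ ∀ j, j ≠ k → p.parts.count j ≤ 1) : ℚ)) =
      coeff n ((X : PowerSeries ℚ) ^ (3 * k) * ∏ j ∈ (sD n).erase k, (1 + X ^ j)) := by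
  have hprop := partialGF_prop ℚ n (sD n) sD_pos
    (fun j => if j = k then {3} else {0, 1})
    (fun i hi => by
      have h : i ≠ k := fun h => hi (h ▸ hk)
      show (0 : ℕ) ∈ if i = k then ({3} : Set ℕ) else {0, 1}
      rw [if_neg h]; exact Or.inl rfl)
  have hset : (univ.filter fun p : n.Partition =>
        p.parts.count k = 3 ∧ ∀ j, j ≠ k → p.parts.count j ≤ 1) =
      univ.filter (fun p : n.Partition =>
        (∀ j, p.parts.count j ∈ (if j = k then ({3} : Set ℕ) else {0, 1})) ∧
          ∀ j ∈ p.parts, j ∈ sD n) := by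
    apply filter_congr
    intro p _
    constructor
    · rintro ⟨h3, h1⟩
      refine ⟨fun j => ?_, fun j hj => parts_mem_sD hj⟩
      split_ifs with h
      · subst h; simpa using h3
      · have := h1 j h
        simp only [Set.mem_insert_iff, Set.mem_singleton_iff]
        omega
    · rintro ⟨hc, -⟩
      have h3 := hc k
      rw [if_pos rfl] at h3
      simp only [Set.mem_singleton_iff] at h3
      refine ⟨h3, fun j hj => ?_⟩
      have := hc j
      rw [if_neg hj] at this
      simp only [Set.mem_insert_iff, Set.mem_singleton_iff] at this
      omega
  have hprod : ∏ i ∈ sD n, indicatorSeries ℚ ((· * i) '' (if i = k then ({3} : Set ℕ) else {0, 1}))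
      = (X : PowerSeries ℚ) ^ (3 * k) * ∏ j ∈ (sD n).erase k, (1 + X ^ j) := by
    rw [← Finset.mul_prod_erase _ _ hk]
    congr 1
    · rw [if_pos rfl, Set.image_singleton, indicator_single]
    · refine Finset.prod_congr rfl fun j hj => ?_
      rw [if_neg (mem_erase.mp hj).1,
        one_add_X_pow ℚ j (sD_pos j (mem_erase.mp hj).2)]
      congr 1
      rw [Set.image_pair]
      simp

  rw [hset]
  rw [hprop]
  rw [hprod]

lemma countO (k : ℕ) (hk : k ∈ sO n) :
    ((#(univ.filter fun p : n.Partition =>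
        (∀ j ∈ p.parts, ¬Even j) ∧ k ∈ p.parts) : ℚ)) =
      coeff n ((X : PowerSeries ℚ) ^ k * partialOddGF (n + 1)) := by
  have hk0 : 0 < k := sO_pos k hk
  have hprop := partialGF_prop ℚ n (sO n) sO_pos
    (fun j => if j = k then {a | a ≠ 0} else Set.univ)
    (fun i hi => by
      have h : i ≠ k := fun h => hi (h ▸ hk)
      show (0 : ℕ) ∈ if i = k then {a | a ≠ 0} else Set.univ
      rw [if_neg h]; trivial)
  have hset : (univ.filter fun p : n.Partition => (∀ j ∈ p.parts, ¬Even j) ∧ k ∈ p.parts) =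
      univ.filter (fun p : n.Partition =>
        (∀ j, p.parts.count j ∈ (if j = k then {a | a ≠ 0} else Set.univ)) ∧
          ∀ j ∈ p.parts, j ∈ sO n) := by
    apply filter_congr
    intro p _
    constructor
    · rintro ⟨hodd, hkm⟩
      refine ⟨fun j => ?_, fun j hj => parts_mem_sO hj (hodd j hj)⟩
      split_ifs with h
      · subst h
        simpa [Set.mem_setOf_eq] using (Multiset.count_pos.mpr hkm).ne'
      · trivial
    · rintro ⟨hc, hmem⟩
      refine ⟨fun j hj => (mem_sO.mp (hmem j hj)).1, ?_⟩
      have := hc k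
      rw [if_pos rfl] at this
      simp only [Set.mem_setOf_eq] at this
      exact Multiset.count_pos.mp (by omega)
  have hG : partialOddGF (n + 1) = ∏ j ∈ sO n, (1 - (X : PowerSeries ℚ) ^ j)⁻¹ := by
    rw [partialOddGF, sO, Finset.prod_map]
    rfl
  have hconst : constantCoeff (1 - (X : PowerSeries ℚ) ^ k) ≠ 0 := by
    rw [RingHom.map_sub, RingHom.map_pow, constantCoeff_one, constantCoeff_X,
      zero_pow hk0.ne', sub_zero]
    exact one_ne_zero
  have h1 : (1 - (X : PowerSeries ℚ) ^ k) * (1 - X ^ k)⁻¹ = 1 :=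
    PowerSeries.mul_inv_cancel _ hconst
  have hP : (1 - (X : PowerSeries ℚ) ^ k) * partialOddGF (n + 1)
      = ∏ j ∈ (sO n).erase k, (1 - X ^ j)⁻¹ := by
    rw [hG, ← Finset.mul_prod_erase _ _ hk, ← mul_assoc, h1, one_mul]
  have hprod : ∏ i ∈ sO n,
        indicatorSeries ℚ ((· * i) '' (if i = k then {a | a ≠ 0} else Set.univ))
      = (X : PowerSeries ℚ) ^ k * partialOddGF (n + 1) := by
    rw [← Finset.mul_prod_erase _ _ hk]
    have himg : (fun x => x * k) '' {a | a ≠ 0} = {b | k ∣ b ∧ b ≠ 0} := by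
      ext b
      simp only [Set.mem_image, Set.mem_setOf_eq]
      constructor
      · rintro ⟨a, ha, rfl⟩
        exact ⟨dvd_mul_left k a, Nat.mul_ne_zero ha hk0.ne'⟩
      · rintro ⟨⟨t, rfl⟩, hb⟩
        exact ⟨t, fun ht => hb (by rw [ht, mul_zero]), mul_comm t k⟩
    obtain ⟨i, hi⟩ : ∃ i, k = i + 1 := ⟨k - 1, by omega⟩
    have hfac : indicatorSeries ℚ ((· * k) '' {a | a ≠ 0})
        = (1 - (X : PowerSeries ℚ) ^ k)⁻¹ - 1 := by
      rw [show ((· * k) '' {a | a ≠ 0}) = {b | k ∣ b ∧ b ≠ 0} from himg, hi, inv_sub_one]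
    have herase : ∏ j ∈ (sO n).erase k,
        indicatorSeries ℚ ((· * j) '' (if j = k then {a | a ≠ 0} else Set.univ))
        = ∏ j ∈ (sO n).erase k, (1 - (X : PowerSeries ℚ) ^ j)⁻¹ := by
      refine Finset.prod_congr rfl fun j hj => ?_
      rw [if_neg (mem_erase.mp hj).1]
      obtain ⟨i', rfl⟩ : ∃ i', j = i' + 1 :=
        ⟨j - 1, by have := sO_pos j (mem_erase.mp hj).2; omega⟩
      rw [num_series']
      have hs : ((fun x => x * (i' + 1)) '' Set.univ : Set ℕ) = {b | (i' + 1) ∣ b} := by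
        ext b
        simp only [Set.mem_image, Set.mem_univ, true_and, Set.mem_setOf_eq]
        constructor
        · rintro ⟨a, rfl⟩; exact dvd_mul_left _ _
        · rintro ⟨t, rfl⟩; exact ⟨t, mul_comm t _⟩
      rw [show ((· * (i' + 1)) '' Set.univ : Set ℕ) = {b | (i' + 1) ∣ b} from hs]
    rw [if_pos rfl, hfac, herase, ← hP]
    calc ((1 - (X : PowerSeries ℚ) ^ k)⁻¹ - 1) * ((1 - X ^ k) * partialOddGF (n + 1))
        = ((1 - X ^ k) * (1 - X ^ k)⁻¹) * partialOddGF (n + 1)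
            - (1 - X ^ k) * partialOddGF (n + 1) := by ring
      _ = (X : PowerSeries ℚ) ^ k * partialOddGF (n + 1) := by rw [h1]; ring
  rw [hset]
  rw [hprop]
  rw [hprod]

lemma sumD : ∑ p ∈ Nat.Partition.distincts n, Multiset.card p.parts
    = ∑ k ∈ sD n, #(univ.filter fun p : n.Partition => p.parts.Nodup ∧ k ∈ p.parts) := by
  have h1 : ∀ k : ℕ, (univ.filter fun p : n.Partition => p.parts.Nodup ∧ k ∈ p.parts)
      = (Nat.Partition.distincts n).filter fun p => k ∈ p.parts := by
    intro k
    rw [Nat.Partition.distincts, filter_filter]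
  simp_rw [h1, card_filter]
  rw [Finset.sum_comm]
  refine sum_congr rfl fun p hp => ?_
  have hnd : p.parts.Nodup := (mem_filter.mp hp).2
  rw [← card_filter]
  have h2 : (sD n).filter (fun k => k ∈ p.parts) = p.parts.toFinset := by
    ext j
    simp only [mem_filter, Multiset.mem_toFinset]
    exact ⟨fun h => h.2, fun h => ⟨parts_mem_sD h, h⟩⟩
  rw [h2, Multiset.toFinset_card_of_nodup hnd]

lemma sumO : ∑ p ∈ Nat.Partition.odds n, p.parts.toFinset.card
    = ∑ k ∈ sO n, #(univ.filter fun p : n.Partition =>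
        (∀ j ∈ p.parts, ¬Even j) ∧ k ∈ p.parts) := by
  have h1 : ∀ k : ℕ, (univ.filter fun p : n.Partition => (∀ j ∈ p.parts, ¬Even j) ∧ k ∈ p.parts)
      = (Nat.Partition.odds n).filter fun p => k ∈ p.parts := by
    intro k
    rw [Nat.Partition.odds, Nat.Partition.restricted, filter_filter]
  simp_rw [h1, card_filter]
  rw [Finset.sum_comm]
  refine sum_congr rfl fun p hp => ?_
  have hodd : ∀ j ∈ p.parts, ¬Even j := (mem_filter.mp hp).2
  rw [← card_filter]
  congr 1
  ext j
  simp only [mem_filter, Multiset.mem_toFinset]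
  exact ⟨fun h => ⟨parts_mem_sO h (hodd j h), h⟩, fun h => h.2⟩

lemma sumC : #(univ.filter fun p : n.Partition => ∃ x ∈ p.parts, p.parts.count x = 3 ∧
      ∀ y ∈ p.parts, y ≠ x → p.parts.count y = 1)
    = ∑ k ∈ sD n, #(univ.filter fun p : n.Partition =>
        p.parts.count k = 3 ∧ ∀ j, j ≠ k → p.parts.count j ≤ 1) := by
  rw [← Finset.card_biUnion]
  · congr 1
    ext p
    simp only [mem_biUnion, mem_filter, mem_univ, true_and]
    constructor
    · rintro ⟨x, hx, h3, h1⟩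
      refine ⟨x, parts_mem_sD hx, h3, fun j hj => ?_⟩
      by_cases hjp : j ∈ p.parts
      · exact le_of_eq (h1 j hjp hj)
      · rw [Multiset.count_eq_zero_of_notMem hjp]; omega
    · rintro ⟨k, hk, h3, h1⟩
      refine ⟨k, Multiset.count_pos.mp (by omega), h3, fun y hy hyk => ?_⟩
      have := h1 y hyk
      have := Multiset.count_pos.mpr hy
      omega
  · intro k₁ _ k₂ _ hne
    rw [Function.onFun, Finset.disjoint_left]
    intro p hp1 hp2
    simp only [mem_filter, mem_univ, true_and] at hp1 hp2
    have := hp2.2 k₁ hne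
    omega

lemma E1 : ∑ k ∈ sD n, ((X : PowerSeries ℚ) ^ k - X ^ (3 * k)) * ∏ j ∈ (sD n).erase k, (1 + X ^ j)
    = (∑ k ∈ sD n, ((X : PowerSeries ℚ) ^ k - X ^ (2 * k))) * ∏ j ∈ sD n, (1 + X ^ j) := by
  rw [Finset.sum_mul]
  refine sum_congr rfl fun k hk => ?_
  rw [← Finset.mul_prod_erase _ (fun j => 1 + (X : PowerSeries ℚ) ^ j) hk]
  have h2 : (X : PowerSeries ℚ) ^ (2 * k) = X ^ k * X ^ k := by rw [two_mul, pow_add]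
  have h3 : (X : PowerSeries ℚ) ^ (3 * k) = X ^ k * X ^ k * X ^ k := by
    rw [show 3 * k = k + k + k by ring, pow_add, pow_add]
  rw [h2, h3]
  ring

lemma coeff_sums_eq {a : ℕ} (ha : a ≤ n) :
    coeff a (∑ k ∈ sD n, ((X : PowerSeries ℚ) ^ k - X ^ (2 * k)))
      = coeff a (∑ k ∈ sO n, (X : PowerSeries ℚ) ^ k) := by
  rw [map_sum, map_sum]
  simp_rw [map_sub, coeff_X_pow]
  rw [Finset.sum_sub_distrib,
    Finset.sum_ite_eq (sD n) a (fun _ => (1 : ℚ)),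
    Finset.sum_ite_eq (sO n) a (fun _ => (1 : ℚ))]
  rcases Nat.even_or_odd a with ⟨b, rfl⟩ | hodd
  · have h2 : ∀ k ∈ sD n, (if b + b = 2 * k then (1 : ℚ) else 0) = if k = b then (1 : ℚ) else 0 :=
      fun k _ => if_congr (by omega) rfl rfl
    rw [Finset.sum_congr rfl h2, Finset.sum_ite_eq' (sD n) b (fun _ => (1 : ℚ))]
    have hnO : b + b ∉ sO n := fun h => by
      have := (mem_sO.mp h).1
      exact this ⟨b, rfl⟩
    rw [if_neg hnO]
    rcases Nat.eq_zero_or_pos b with rfl | hb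
    · have hn1 : (0 : ℕ) + 0 ∉ sD n := fun h => by have := (mem_sD.mp h).1; omega
      have hn2 : (0 : ℕ) ∉ sD n := fun h => by have := (mem_sD.mp h).1; omega
      split_ifs <;> norm_num <;> tauto
    · rw [if_pos (mem_sD.mpr ⟨by omega, by omega⟩), if_pos (mem_sD.mpr ⟨by omega, by omega⟩)]
      norm_num
  · obtain ⟨c, hc⟩ := hodd
    have h2 : ∀ k ∈ sD n, (if a = 2 * k then (1 : ℚ) else 0) = 0 :=
      fun k _ => if_neg (by omega)
    rw [Finset.sum_congr rfl h2, Finset.sum_const_zero, sub_zero,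
      if_pos (mem_sD.mpr ⟨by omega, by omega⟩),
      if_pos (mem_sO.mpr ⟨by rw [Nat.even_iff]; omega, by omega⟩)]

lemma main_q : ((∑ p ∈ Nat.Partition.distincts n, Multiset.card p.parts : ℕ) : ℚ)
    = ((#(univ.filter fun p : n.Partition => ∃ x ∈ p.parts, p.parts.count x = 3 ∧
        ∀ y ∈ p.parts, y ≠ x → p.parts.count y = 1) : ℕ) : ℚ)
      + ((∑ p ∈ Nat.Partition.odds n, p.parts.toFinset.card : ℕ) : ℚ) := by
  rw [sumD, sumC, sumO]
  push_cast
  rw [Finset.sum_congr rfl (fun k hk => countD k hk),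
    Finset.sum_congr rfl (fun k hk => count3 k hk),
    Finset.sum_congr rfl (fun k hk => countO k hk)]
  rw [← sub_eq_iff_eq_add']
  have hL : ∑ k ∈ sD n, coeff n ((X : PowerSeries ℚ) ^ k * ∏ j ∈ (sD n).erase k, (1 + X ^ j))
      - ∑ k ∈ sD n, coeff n ((X : PowerSeries ℚ) ^ (3 * k) * ∏ j ∈ (sD n).erase k, (1 + X ^ j))
      = coeff n (∑ k ∈ sD n,
          ((X : PowerSeries ℚ) ^ k - X ^ (3 * k)) * ∏ j ∈ (sD n).erase k, (1 + X ^ j)) := by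
    rw [map_sum, ← Finset.sum_sub_distrib]
    refine sum_congr rfl fun k _ => ?_
    rw [sub_mul, map_sub]
  rw [hL, E1]
  have hR : ∑ k ∈ sO n, coeff n ((X : PowerSeries ℚ) ^ k * partialOddGF (n + 1))
      = coeff n ((∑ k ∈ sO n, (X : PowerSeries ℚ) ^ k) * partialOddGF (n + 1)) := by
    rw [Finset.sum_mul, map_sum]
  rw [hR]
  have hF : ∏ j ∈ sD n, (1 + (X : PowerSeries ℚ) ^ j) = partialDistinctGF (n + 1) := by
    rw [partialDistinctGF, sD, Finset.prod_map]
    rfl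
  rw [hF, coeff_mul, coeff_mul]
  refine sum_congr rfl fun ab hab => ?_
  have hab' := Finset.HasAntidiagonal.mem_antidiagonal.mp hab
  rw [coeff_sums_eq (by omega : ab.1 ≤ n),
    same_coeffs (n + 1) ab.2 (by omega)]

end

end OPT3

open scoped Classical in
theorem one_part_thrice_count (n : ℕ) (hn : 0 < n) :
    ((Finset.univ.filter fun p : n.Partition =>
        ∃ x ∈ p.parts, p.parts.count x = 3 ∧
          ∀ y ∈ p.parts, y ≠ x → p.parts.count y = 1).card : ℤ) =
      (∑ p ∈ Nat.Partition.distincts n, (Multiset.card p.parts : ℤ)) -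
        ∑ p ∈ Nat.Partition.odds n, (p.parts.toFinset.card : ℤ) := by
  have h := @OPT3.main_q n
  have hN : (∑ p ∈ Nat.Partition.distincts n, Multiset.card p.parts)
      = (Finset.univ.filter fun p : n.Partition => ∃ x ∈ p.parts, p.parts.count x = 3 ∧
          ∀ y ∈ p.parts, y ≠ x → p.parts.count y = 1).card
        + ∑ p ∈ Nat.Partition.odds n, p.parts.toFinset.card := by exact_mod_cast h
  rw [show (∑ p ∈ Nat.Partition.distincts n, (Multiset.card p.parts : ℤ))
      = ((∑ p ∈ Nat.Partition.distincts n, Multiset.card p.parts : ℕ) : ℤ) by push_cast; rfl,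
    show (∑ p ∈ Nat.Partition.odds n, (p.parts.toFinset.card : ℤ))
      = ((∑ p ∈ Nat.Partition.odds n, p.parts.toFinset.card : ℕ) : ℤ) by push_cast; rfl]
  omega
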